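/- Let $d \geq 1$, $L = (L_j)_{j=1}^{d} \in \mathbb{R}_{>0}^{d}$ with $\underline{L} = \min_j L_j > 1$, and $f_L(x) = \prod_{j=1}^{d}(1 + |x_j|)^{-L_j}$ on $\mathbb{R}^d$. Then there exists a constant $C > 0$ (depending only on $d$ and $L$) such that for any $A \geq 0$ and any pair of full-rank lattices $\Lambda \subseteq \Lambda_0 \subset \mathbb{R}^d$, one has $\sum_{\xi \in \Lambda \setminus \{0\},\, \|\xi\| \geq A} f_L(\xi) \leq C\, r(\Lambda_0)^{-d}(1 + r(\Lambda_0))^{d\bar{L}} \max(A, r(\Lambda))^{1 - \underline{L}}$, where $\bar{L} = \max_j L_j$ and $r(\Lambda) = \tfrac{1}{2}\inf_{\xi \in \Lambda \setminus \{0\}} \|\xi\|$. -/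

import Mathlib

open MeasureTheory
open scoped ENNReal

/-! ### Auxiliary lemmas -/

noncomputable def zet (l : ℝ) : ℝ := ∑' q : ℕ, ((q : ℝ) + 1) ^ (-l)

lemma zet_summable {l : ℝ} (hl : 1 < l) :
    Summable (fun q : ℕ => ((q : ℝ) + 1) ^ (-l)) := by
  have h2 : Summable (fun n : ℕ => ((n : ℝ)) ^ (-l)) := by
    have := Real.summable_nat_rpow_inv.mpr hl
    simpa [Real.rpow_neg (Nat.cast_nonneg _)] using this
  have h3 := (summable_nat_add_iff (f := fun n : ℕ => ((n : ℝ)) ^ (-l)) 1).mpr h2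
  simpa [Nat.cast_add] using h3

lemma zet_one_le {l : ℝ} (hl : 1 < l) : 1 ≤ zet l := by
  have h0 : ((0 : ℕ) : ℝ) + 1 = 1 := by norm_num
  have := Summable.le_tsum (zet_summable hl) 0 (fun q _ => by positivity)
  simpa [h0, zet] using this

lemma zet_pos {l : ℝ} (hl : 1 < l) : 0 < zet l := lt_of_lt_of_le one_pos (zet_one_le hl)

lemma group_sum {l a c : ℝ} (hl : 1 < l) (ha : 0 < a) (hc : 0 < c) :
    ∑' k : ℕ, ENNReal.ofReal ((c + a * k) ^ (-l)) ≤
      ENNReal.ofReal ((c / a + 1) * c ^ (-l) * zet l) := by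
  set N : ℕ := ⌈c / a⌉₊ with hNdef
  have hNpos : 0 < N := Nat.ceil_pos.mpr (div_pos hc ha)
  haveI : NeZero N := ⟨hNpos.ne'⟩
  have hcN : c ≤ a * N := by
    have h1 : c / a ≤ (N : ℝ) := Nat.le_ceil (c / a)
    calc c = a * (c / a) := by field_simp
    _ ≤ a * N := by nlinarith
  have hpt : ∀ k : ℕ, (c + a * k) ^ (-l) ≤ (c * (1 + ((k / N : ℕ) : ℝ))) ^ (-l) := by
    intro k
    apply Real.rpow_le_rpow_of_nonpos (by positivity) ?_ (by linarith)
    have h2 : ((k / N : ℕ) : ℝ) * N ≤ (k : ℝ) := by exact_mod_cast Nat.div_mul_le_self k N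
    have h3 : (0:ℝ) ≤ ((k / N : ℕ) : ℝ) := Nat.cast_nonneg _
    nlinarith
  calc ∑' k : ℕ, ENNReal.ofReal ((c + a * k) ^ (-l))
      ≤ ∑' k : ℕ, ENNReal.ofReal ((c * (1 + ((k / N : ℕ) : ℝ))) ^ (-l)) :=
        Summable.tsum_le_tsum (fun k => ENNReal.ofReal_le_ofReal (hpt k)) ENNReal.summable ENNReal.summable
    _ = ∑' p : ℕ × Fin N, ENNReal.ofReal ((c * (1 + (p.1 : ℝ))) ^ (-l)) := by
        rw [← Equiv.tsum_eq (Nat.divModEquiv N)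
          (f := fun p : ℕ × Fin N => ENNReal.ofReal ((c * (1 + (p.1 : ℝ))) ^ (-l)))]
        simp [Nat.divModEquiv]
    _ = ∑' q : ℕ, ∑' r : Fin N, ENNReal.ofReal ((c * (1 + (q : ℝ))) ^ (-l)) :=
        ENNReal.tsum_prod'
    _ = ∑' q : ℕ, (N : ℝ≥0∞) * ENNReal.ofReal ((c * (1 + (q : ℝ))) ^ (-l)) := by
        congr 1; funext q
        simp [tsum_fintype, Finset.sum_const, Finset.card_univ, nsmul_eq_mul]
    _ = (N : ℝ≥0∞) * ∑' q : ℕ, ENNReal.ofReal ((c * (1 + (q : ℝ))) ^ (-l)) :=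
        ENNReal.tsum_mul_left
    _ = (N : ℝ≥0∞) * ENNReal.ofReal (c ^ (-l) * zet l) := by
        congr 1
        have hterm : ∀ q : ℕ, (c * (1 + (q : ℝ))) ^ (-l) = c ^ (-l) * (((q : ℝ) + 1) ^ (-l)) := by
          intro q
          rw [show (1 + (q:ℝ)) = ((q:ℝ) + 1) by ring, Real.mul_rpow hc.le (by positivity)]
        calc ∑' q : ℕ, ENNReal.ofReal ((c * (1 + (q : ℝ))) ^ (-l))
            = ∑' q : ℕ, ENNReal.ofReal (c ^ (-l)) * ENNReal.ofReal (((q : ℝ) + 1) ^ (-l)) := by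
              congr 1; funext q
              rw [hterm q, ENNReal.ofReal_mul (by positivity)]
          _ = ENNReal.ofReal (c ^ (-l)) * ENNReal.ofReal (zet l) := by
              rw [ENNReal.tsum_mul_left]
              congr 1
              rw [zet]
              exact (ENNReal.ofReal_tsum_of_nonneg (fun q => by positivity)
                (zet_summable hl)).symm
          _ = ENNReal.ofReal (c ^ (-l) * zet l) := by
              rw [← ENNReal.ofReal_mul (by positivity)]
    _ ≤ ENNReal.ofReal (c / a + 1) * ENNReal.ofReal (c ^ (-l) * zet l) := by
        apply mul_le_mul_left
        rw [← ENNReal.ofReal_natCast]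
        exact ENNReal.ofReal_le_ofReal (le_of_lt (Nat.ceil_lt_add_one (by positivity)))
    _ = ENNReal.ofReal ((c / a + 1) * (c ^ (-l) * zet l)) := by
        rw [← ENNReal.ofReal_mul (by positivity)]
    _ = ENNReal.ofReal ((c / a + 1) * c ^ (-l) * zet l) := by ring_nf

lemma tail_sum {l s Q : ℝ} (hl : 1 < l) (hs : 0 < s) (hQ : 1 ≤ Q) :
    ∑' k : ℕ, (if Q ≤ 1 + s * k then ENNReal.ofReal ((1 + s * k) ^ (-l)) else 0) ≤
      ENNReal.ofReal (2 ^ l * (1 / s + 1) * Q ^ (1 - l) * zet l) := by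
  have hQ0 : 0 < Q := lt_of_lt_of_le one_pos hQ
  have hpt : ∀ k : ℕ, (if Q ≤ 1 + s * k then ENNReal.ofReal ((1 + s * k) ^ (-l)) else 0)
      ≤ ENNReal.ofReal ((Q / 2 + (s / 2) * k) ^ (-l)) := by
    intro k
    split_ifs with h
    · apply ENNReal.ofReal_le_ofReal
      apply Real.rpow_le_rpow_of_nonpos (by positivity) ?_ (by linarith)
      have hk : (0:ℝ) ≤ s * k := by positivity
      linarith
    · exact zero_le
  calc ∑' k : ℕ, (if Q ≤ 1 + s * k then ENNReal.ofReal ((1 + s * k) ^ (-l)) else 0)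
      ≤ ∑' k : ℕ, ENNReal.ofReal ((Q / 2 + (s / 2) * k) ^ (-l)) :=
        Summable.tsum_le_tsum hpt ENNReal.summable ENNReal.summable
    _ ≤ ENNReal.ofReal (((Q / 2) / (s / 2) + 1) * (Q / 2) ^ (-l) * zet l) :=
        group_sum hl (by positivity) (by positivity)
    _ ≤ ENNReal.ofReal (2 ^ l * (1 / s + 1) * Q ^ (1 - l) * zet l) := by
        apply ENNReal.ofReal_le_ofReal
        have h1 : (Q / 2) ^ (-l) = 2 ^ l * Q ^ (-l) := by
          rw [Real.div_rpow hQ0.le (by norm_num), Real.rpow_neg (by norm_num : (0:ℝ) ≤ 2)]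
          field_simp
        have h2 : Q * Q ^ (-l) = Q ^ (1 - l) := by
          rw [show (1 - l) = 1 + (-l) by ring, Real.rpow_add hQ0, Real.rpow_one]
        have h3 : Q ^ (-l) ≤ Q ^ (1 - l) :=
          Real.rpow_le_rpow_of_exponent_le hQ (by linarith)
        have h4 : (Q / 2) / (s / 2) = Q / s := by ring
        have h5 : (0:ℝ) ≤ Q ^ (-l) := by positivity
        have h6 : (0:ℝ) < (2:ℝ) ^ l := by positivity
        have key : ((Q / 2) / (s / 2) + 1) * (Q / 2) ^ (-l) ≤ 2 ^ l * (1 / s + 1) * Q ^ (1 - l) := by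
          rw [h4, h1]
          have e1 : Q / s * (2 ^ l * Q ^ (-l)) = 2 ^ l * (1 / s) * Q ^ (1 - l) := by
            rw [← h2]; field_simp
          have e2 : (Q / s + 1) * (2 ^ l * Q ^ (-l)) =
              2 ^ l * (1 / s) * Q ^ (1 - l) + 2 ^ l * Q ^ (-l) := by
            rw [← e1]; ring
          rw [e2]
          have e3 : 2 ^ l * Q ^ (-l) ≤ 2 ^ l * Q ^ (1 - l) := by nlinarith
          have e4 : 2 ^ l * (1 / s + 1) * Q ^ (1 - l) =
              2 ^ l * (1 / s) * Q ^ (1 - l) + 2 ^ l * Q ^ (1 - l) := by ring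
          linarith
        exact mul_le_mul_of_nonneg_right key (le_of_lt (zet_pos hl))

def intShift (n : ℤ) : ℕ := (max n (-n - 1)).toNat

lemma intShift_cast (n : ℤ) : (intShift n : ℝ) = max (n : ℝ) (-(n : ℝ) - 1) := by
  have hnn : (0:ℤ) ≤ max n (-n - 1) := by
    rcases le_or_gt 0 n with h | h
    · exact le_max_of_le_left h
    · exact le_max_of_le_right (by omega)
  have h1 : ((intShift n : ℕ) : ℤ) = max n (-n - 1) := by
    rw [intShift]; exact Int.toNat_of_nonneg hnn
  calc (intShift n : ℝ) = (((intShift n : ℕ) : ℤ) : ℝ) := by norm_cast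
    _ = ((max n (-n - 1) : ℤ) : ℝ) := by rw [h1]
    _ = max (n : ℝ) (-(n : ℝ) - 1) := by
        rw [Int.cast_max]; push_cast; ring_nf

def intEquiv : Bool × ℕ ≃ ℤ where
  toFun p := if p.1 then -(p.2 : ℤ) - 1 else p.2
  invFun n := if 0 ≤ n then (false, n.toNat) else (true, (-n - 1).toNat)
  left_inv := by
    rintro ⟨b, k⟩
    cases b <;> simp <;> omega
  right_inv := by
    intro n
    rcases le_or_gt 0 n with h | h
    · simp [h, Int.toNat_of_nonneg h]
    · have h2 : ¬ (0 ≤ n) := by omega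
      simp [h2, Int.toNat_of_nonneg (by omega : (0:ℤ) ≤ -n - 1)]
      omega

lemma intShift_intEquiv (b : Bool) (k : ℕ) : intShift (intEquiv (b, k)) = k := by
  cases b
  · show intShift (k : ℤ) = k
    rw [intShift, max_eq_left (by omega)]; omega
  · show intShift (-(k : ℤ) - 1) = k
    rw [intShift, max_eq_right (by omega)]; omega

lemma int_shift_tsum (g : ℕ → ℝ≥0∞) :
    ∑' n : ℤ, g (intShift n) = 2 * ∑' k : ℕ, g k := by
  calc ∑' n : ℤ, g (intShift n)
      = ∑' p : Bool × ℕ, g (intShift (intEquiv p)) := (Equiv.tsum_eq intEquiv _).symm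
    _ = ∑' b : Bool, ∑' k : ℕ, g (intShift (intEquiv (b, k))) := ENNReal.tsum_prod'
    _ = ∑' b : Bool, ∑' k : ℕ, g k := by
        congr 1; funext b; congr 1; funext k; rw [intShift_intEquiv]
    _ = 2 * ∑' k : ℕ, g k := by
        rw [tsum_fintype]
        simp [two_mul]

lemma tsum_pi_prod : ∀ (d : ℕ) (g : Fin d → ℤ → ℝ≥0∞),
    ∑' n : Fin d → ℤ, ∏ j, g j (n j) = ∏ j, ∑' m : ℤ, g j m := by
  intro d
  induction d with
  | zero =>
    intro g
    simp only [Finset.univ_eq_empty, Finset.prod_empty]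
    exact tsum_eq_single (fun i => (0 : ℤ)) (fun b hb => absurd (Subsingleton.elim b _) hb) |>.trans rfl
  | succ d ih =>
    intro g
    calc ∑' n : Fin (d + 1) → ℤ, ∏ j, g j (n j)
        = ∑' p : ℤ × (Fin d → ℤ), (g 0 p.1 * ∏ j : Fin d, g j.succ (p.2 j)) := by
          rw [← Equiv.tsum_eq (Fin.consEquiv (fun _ : Fin (d + 1) => ℤ))
            (f := fun n : Fin (d+1) → ℤ => ∏ j, g j (n j))]
          congr 1; funext p
          simp only [Fin.consEquiv_apply]
          rw [Fin.prod_univ_succ]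
          simp
      _ = ∑' a : ℤ, ∑' m : Fin d → ℤ, (g 0 a * ∏ j : Fin d, g j.succ (m j)) :=
          ENNReal.tsum_prod'
      _ = (∑' a : ℤ, g 0 a) * ∑' m : Fin d → ℤ, ∏ j : Fin d, g j.succ (m j) := by
          rw [← ENNReal.tsum_mul_right]
          congr 1; funext a
          rw [ENNReal.tsum_mul_left]
      _ = (∑' a : ℤ, g 0 a) * ∏ j : Fin d, ∑' m : ℤ, g j.succ m := by
          rw [ih]
      _ = ∏ j, ∑' m : ℤ, g j m := by
          rw [Fin.prod_univ_succ]

lemma floor_bounds {s x : ℝ} (hs : 0 < s) :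
    s * (intShift ⌊x / s⌋ : ℝ) ≤ |x| ∧ |x| - s ≤ s * (intShift ⌊x / s⌋ : ℝ) := by
  set n := ⌊x / s⌋ with hn
  have hn1 : (n : ℝ) * s ≤ x := (le_div_iff₀ hs).mp (Int.floor_le _)
  have hn2 : x < ((n : ℝ) + 1) * s := (div_lt_iff₀ hs).mp (Int.lt_floor_add_one _)
  rw [intShift_cast]
  rcases le_or_gt 0 n with h | h
  · have hc : (0:ℝ) ≤ (n:ℝ) := by exact_mod_cast h
    rw [max_eq_left (by linarith)]
    have hx0 : 0 ≤ x := le_trans (by nlinarith) hn1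
    rw [abs_of_nonneg hx0]
    constructor <;> nlinarith
  · have hc : (n:ℝ) ≤ -1 := by exact_mod_cast (by omega : n ≤ -1)
    rw [max_eq_right (by linarith)]
    have hx0 : x < 0 := lt_of_lt_of_le hn2 (by nlinarith)
    rw [abs_of_neg hx0]
    constructor <;> nlinarith

lemma coord_bound {L l s x : ℝ} (hs : 0 < s) (hl : 0 < l) (hlL : l ≤ L) :
    (1 + |x|) ^ (-L) ≤ (1 + s * (intShift ⌊x / s⌋ : ℝ)) ^ (-l) := by
  have hb := (floor_bounds (x := x) hs).1
  have ht : (0:ℝ) ≤ s * (intShift ⌊x / s⌋ : ℝ) := by positivity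
  calc (1 + |x|) ^ (-L) ≤ (1 + |x|) ^ (-l) :=
        Real.rpow_le_rpow_of_exponent_le (by linarith [abs_nonneg x]) (by linarith)
    _ ≤ (1 + s * (intShift ⌊x / s⌋ : ℝ)) ^ (-l) :=
        Real.rpow_le_rpow_of_nonpos (by linarith) (by linarith) (by linarith)

lemma inj_aux {d : ℕ} (hd : 0 < d) {s : ℝ} (hs : 0 < s) (x y : EuclideanSpace ℝ (Fin d))
    (h : ∀ j, ⌊x j / s⌋ = ⌊y j / s⌋) : ‖x - y‖ < s * Real.sqrt d := by
  have hj : ∀ j, |x j - y j| < s := by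
    intro j
    have h1 : (⌊x j / s⌋ : ℝ) * s ≤ x j := (le_div_iff₀ hs).mp (Int.floor_le _)
    have h2 : x j < ((⌊x j / s⌋ : ℝ) + 1) * s := (div_lt_iff₀ hs).mp (Int.lt_floor_add_one _)
    have h3 : (⌊y j / s⌋ : ℝ) * s ≤ y j := (le_div_iff₀ hs).mp (Int.floor_le _)
    have h4 : y j < ((⌊y j / s⌋ : ℝ) + 1) * s := (div_lt_iff₀ hs).mp (Int.lt_floor_add_one _)
    rw [h j] at h1 h2
    rw [abs_sub_lt_iff]
    constructor <;> linarith
  have hnorm : ‖x - y‖ = Real.sqrt (∑ j : Fin d, (x j - y j) ^ 2) := by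
    rw [EuclideanSpace.norm_eq]
    congr 1
    apply Finset.sum_congr rfl
    intro j _
    simp [Real.norm_eq_abs, sq_abs]
  rw [hnorm]
  have hsum : ∑ j : Fin d, (x j - y j) ^ 2 < (d : ℝ) * s ^ 2 := by
    calc ∑ j : Fin d, (x j - y j) ^ 2 < ∑ _j : Fin d, s ^ 2 := by
          apply Finset.sum_lt_sum_of_nonempty (by simp [Fin.pos_iff_nonempty.mp hd])
          intro j _
          nlinarith [hj j, abs_nonneg (x j - y j), sq_abs (x j - y j)]
      _ = (d : ℝ) * s ^ 2 := by
          rw [Finset.sum_const, Finset.card_univ, Fintype.card_fin, nsmul_eq_mul]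
  calc Real.sqrt (∑ j : Fin d, (x j - y j) ^ 2) < Real.sqrt ((d:ℝ) * s ^ 2) :=
        Real.sqrt_lt_sqrt (Finset.sum_nonneg fun j _ => sq_nonneg _) hsum
    _ = s * Real.sqrt d := by
        rw [Real.sqrt_mul (by positivity), Real.sqrt_sq hs.le]; ring

lemma exists_big_coord {d : ℕ} (hd : 0 < d) (x : EuclideanSpace ℝ (Fin d)) :
    ∃ j : Fin d, ‖x‖ / Real.sqrt d ≤ |x j| := by
  by_contra h
  push_neg at h
  have hd0 : (0:ℝ) < Real.sqrt d := Real.sqrt_pos.mpr (by exact_mod_cast hd)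
  rcases eq_or_lt_of_le (norm_nonneg x) with h0 | h0
  · refine absurd (h ⟨0, hd⟩) (not_lt.mpr ?_)
    rw [← h0, zero_div]
    exact abs_nonneg _
  · have hc : 0 < ‖x‖ / Real.sqrt d := by positivity
    have hsum : ∑ j : Fin d, (x j) ^ 2 < ∑ j : Fin d, (‖x‖ / Real.sqrt d) ^ 2 := by
      apply Finset.sum_lt_sum_of_nonempty (by simp [Fin.pos_iff_nonempty.mp hd])
      intro j _
      have := h j
      nlinarith [abs_nonneg (x j), sq_abs (x j)]
    have hnorm : ‖x‖ ^ 2 = ∑ j : Fin d, (x j) ^ 2 := by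
      rw [EuclideanSpace.norm_eq]
      rw [Real.sq_sqrt (by positivity)]
      simp [Real.norm_eq_abs, sq_abs]
    have hconst : ∑ j : Fin d, (‖x‖ / Real.sqrt d) ^ 2 = ‖x‖ ^ 2 := by
      rw [Finset.sum_const, Finset.card_univ, Fintype.card_fin]
      rw [nsmul_eq_mul, div_pow, Real.sq_sqrt (by positivity : (0:ℝ) ≤ (d:ℝ))]
      field_simp
    rw [hconst, ← hnorm] at hsum
    exact lt_irrefl _ hsum

/-! ### Lattice lemmas -/

/-- `f_L(x) = ∏_j (1+|x_j|)^{-L_j}`. -/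
noncomputable def fL (d : ℕ) (L : Fin d → ℝ) (x : EuclideanSpace ℝ (Fin d)) : ℝ :=
  ∏ j, (1 + |x j|) ^ (-(L j))

/-- The packing radius `r(Λ)`, half the length of a shortest nonzero vector. -/
noncomputable def rLat (d : ℕ) (Λ : Submodule ℤ (EuclideanSpace ℝ (Fin d))) : ℝ :=
  (1 / 2) * sInf ((fun x : EuclideanSpace ℝ (Fin d) => ‖x‖) '' {x | x ∈ Λ ∧ x ≠ 0})

lemma latt_nonzero {d : ℕ} (hd : 0 < d) (Λ : Submodule ℤ (EuclideanSpace ℝ (Fin d)))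
    (hspan : Submodule.span ℝ (Λ : Set (EuclideanSpace ℝ (Fin d))) = ⊤) :
    ∃ x : EuclideanSpace ℝ (Fin d), x ∈ Λ ∧ x ≠ 0 := by
  by_contra h
  push_neg at h
  have hsub : (Λ : Set (EuclideanSpace ℝ (Fin d))) ⊆ {0} := by
    intro x hx
    simp [h x hx]
  have hle : Submodule.span ℝ (Λ : Set (EuclideanSpace ℝ (Fin d))) ≤
      Submodule.span ℝ ({0} : Set (EuclideanSpace ℝ (Fin d))) := Submodule.span_mono hsub
  rw [hspan, Submodule.span_zero_singleton] at hle
  have hx : (EuclideanSpace.single (⟨0, hd⟩ : Fin d) (1:ℝ)) ∈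
      (⊤ : Submodule ℝ (EuclideanSpace ℝ (Fin d))) := Submodule.mem_top
  have := hle hx
  rw [Submodule.mem_bot] at this
  have h1 := congrArg (fun v => v ⟨0, hd⟩) this
  simp [EuclideanSpace.single] at h1

lemma latt_sep {d : ℕ} (Λ : Submodule ℤ (EuclideanSpace ℝ (Fin d)))
    (hdisc : DiscreteTopology Λ)
    (hne : ∃ x : EuclideanSpace ℝ (Fin d), x ∈ Λ ∧ x ≠ 0) :
    0 < rLat d Λ ∧ ∀ x ∈ Λ, x ≠ 0 → 2 * rLat d Λ ≤ ‖x‖ := by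
  classical
  set S := ((fun x : EuclideanSpace ℝ (Fin d) => ‖x‖) '' {x | x ∈ Λ ∧ x ≠ 0}) with hS
  have hSne : S.Nonempty := by
    obtain ⟨x, hx, hx0⟩ := hne
    exact ⟨‖x‖, ⟨x, ⟨hx, hx0⟩, rfl⟩⟩
  have hSbdd : BddBelow S := ⟨0, by rintro y ⟨x, _, rfl⟩; exact norm_nonneg x⟩
  have hopen : IsOpen ({(0 : Λ)} : Set Λ) := isOpen_discrete _
  obtain ⟨ε, hε, hball⟩ := Metric.isOpen_iff.mp hopen 0 rfl
  have hsmall : ∀ x ∈ Λ, ‖x‖ < ε → x = 0 := by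
    intro x hx hxe
    have hmem : (⟨x, hx⟩ : Λ) ∈ Metric.ball (0 : Λ) ε := by
      rw [Metric.mem_ball, Subtype.dist_eq]
      simpa using hxe
    have := hball hmem
    simpa [Subtype.ext_iff] using this
  have hlow : ∀ y ∈ S, ε ≤ y := by
    rintro y ⟨x, ⟨hx, hx0⟩, rfl⟩
    by_contra hy
    exact hx0 (hsmall x hx (not_le.mp hy))
  have hInf : ε ≤ sInf S := le_csInf hSne hlow
  constructor
  · have : 0 < sInf S := lt_of_lt_of_le hε hInf
    rw [rLat]; positivity
  · intro x hx hx0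
    have : sInf S ≤ ‖x‖ := csInf_le hSbdd ⟨x, ⟨hx, hx0⟩, rfl⟩
    rw [rLat]; linarith

lemma rLat_mono {d : ℕ} {Λ Λ₀ : Submodule ℤ (EuclideanSpace ℝ (Fin d))} (h : Λ ≤ Λ₀)
    (hne : ∃ x : EuclideanSpace ℝ (Fin d), x ∈ Λ ∧ x ≠ 0) :
    rLat d Λ₀ ≤ rLat d Λ := by
  have hSne : ((fun x : EuclideanSpace ℝ (Fin d) => ‖x‖) '' {x | x ∈ Λ ∧ x ≠ 0}).Nonempty := by
    obtain ⟨x, hx, hx0⟩ := hne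
    exact ⟨‖x‖, ⟨x, ⟨hx, hx0⟩, rfl⟩⟩
  have hbdd : BddBelow ((fun x : EuclideanSpace ℝ (Fin d) => ‖x‖) '' {x | x ∈ Λ₀ ∧ x ≠ 0}) :=
    ⟨0, by rintro y ⟨x, _, rfl⟩; exact norm_nonneg x⟩
  have hsub : ((fun x : EuclideanSpace ℝ (Fin d) => ‖x‖) '' {x | x ∈ Λ ∧ x ≠ 0}) ⊆
      ((fun x : EuclideanSpace ℝ (Fin d) => ‖x‖) '' {x | x ∈ Λ₀ ∧ x ≠ 0}) := by
    rintro y ⟨x, ⟨hx, hx0⟩, rfl⟩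
    exact ⟨x, ⟨h hx, hx0⟩, rfl⟩
  have := csInf_le_csInf hbdd hSne hsub
  rw [rLat, rLat]; linarith

set_option maxHeartbeats 2000000 in
/-- For exponents `L` with `min L > 1` there is a constant `C > 0`
(depending only on `d` and `L`) so that for every pair of full-rank lattices `Λ ⊆ Λ₀` in
`ℝ^d` and every `A ≥ 0`,
`∑_{ξ ∈ Λ \ {0}, ‖ξ‖ ≥ A} f_L(ξ) ≤ C r(Λ₀)^{-d}(1+r(Λ₀))^{d·max L} max(A, r(Λ))^{1 - min L}`. -/
theorem stmt_7 (d : ℕ) (hd : 0 < d) (L : Fin d → ℝ) (hLpos : ∀ j, 0 < L j)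
    (hL : 1 < ⨅ j, L j) :
    ∃ C > 0, ∀ Λ Λ₀ : Submodule ℤ (EuclideanSpace ℝ (Fin d)),
      DiscreteTopology Λ → DiscreteTopology Λ₀ →
      Submodule.span ℝ (Λ : Set (EuclideanSpace ℝ (Fin d))) = ⊤ →
      Submodule.span ℝ (Λ₀ : Set (EuclideanSpace ℝ (Fin d))) = ⊤ →
      Λ ≤ Λ₀ → ∀ A : ℝ, 0 ≤ A →
      (∑' ξ : {x : EuclideanSpace ℝ (Fin d) // x ∈ Λ ∧ x ≠ 0 ∧ A ≤ ‖x‖}, fL d L ξ) ≤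
        C * rLat d Λ₀ ^ (-(d : ℝ)) * (1 + rLat d Λ₀) ^ ((d : ℝ) * ⨆ j, L j) *
          max A (rLat d Λ) ^ (1 - ⨅ j, L j) := by
  classical
  set l : ℝ := ⨅ j, L j with hldef
  set Lbar : ℝ := ⨆ j, L j with hLbardef
  have hl1 : 1 < l := hL
  have hl_pos : 0 < l := lt_trans one_pos hl1
  have hl_le : ∀ j, l ≤ L j := fun j => ciInf_le (Finite.bddBelow_range L) j
  have hLbar_ge : l ≤ Lbar :=
    le_trans (hl_le ⟨0, hd⟩) (le_ciSup (Finite.bddAbove_range L) ⟨0, hd⟩)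
  set sd : ℝ := Real.sqrt d with hsddef
  have hsd : 0 < sd := Real.sqrt_pos.mpr (by exact_mod_cast hd)
  have hsd1 : 1 ≤ sd := by
    rw [hsddef, show (1:ℝ) = Real.sqrt 1 by rw [Real.sqrt_one]]
    exact Real.sqrt_le_sqrt (by exact_mod_cast hd)
  have hd1 : (1:ℝ) ≤ (d:ℝ) := by exact_mod_cast hd
  set C : ℝ := d * (2 * zet l * sd) ^ d * 2 ^ l * (4 * sd) ^ (l - 1) with hC
  have hzet : 0 < zet l := zet_pos hl1
  have hCpos : 0 < C := by
    rw [hC]; positivity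
  refine ⟨C, hCpos, ?_⟩
  intro Λ Λ₀ hdΛ hdΛ₀ hspan hspan₀ hsub A hA
  set E := EuclideanSpace ℝ (Fin d)
  have hne : ∃ x : E, x ∈ Λ ∧ x ≠ 0 := latt_nonzero hd Λ hspan
  have hne₀ : ∃ x : E, x ∈ Λ₀ ∧ x ≠ 0 := latt_nonzero hd Λ₀ hspan₀
  obtain ⟨hr₀pos, hsep₀⟩ := latt_sep Λ₀ hdΛ₀ hne₀
  obtain ⟨hrpos, hsep⟩ := latt_sep Λ hdΛ hne
  set r₀ : ℝ := rLat d Λ₀ with hr₀def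
  set r : ℝ := rLat d Λ with hrdef
  have hrr : r₀ ≤ r := rLat_mono hsub hne
  set s : ℝ := 2 * r₀ / sd with hsdef
  have hspos : 0 < s := by rw [hsdef]; positivity
  set M : ℝ := max A r with hMdef
  have hMpos : 0 < M := lt_of_lt_of_le hrpos (le_max_right _ _)
  set M' : ℝ := max M (2 * r₀) with hM'def
  have hM'M : M ≤ M' := le_max_left _ _
  set Q : ℝ := max 1 (1 + M' / sd - s) with hQdef
  have hQ1 : 1 ≤ Q := le_max_left _ _
  have hQ0 : 0 < Q := lt_of_lt_of_le one_pos hQ1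
  -- the subtype
  set T := {x : E // x ∈ Λ ∧ x ≠ 0 ∧ A ≤ ‖x‖} with hT
  -- grid functions
  set fullT : ℤ → ℝ≥0∞ := fun m => ENNReal.ofReal ((1 + s * (intShift m : ℝ)) ^ (-l))
    with hfullT
  set gT : Fin d → Fin d → ℤ → ℝ≥0∞ := fun j₀ j m =>
    if j = j₀ then (if Q ≤ 1 + s * (intShift m : ℝ) then fullT m else 0) else fullT m with hgT
  set Φ : T → (Fin d → ℤ) := fun ξ j => ⌊(ξ : E) j / s⌋ with hΦ
  set U : ℝ := 2 * ((1 / s + 1) * zet l) with hU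
  set V : ℝ := 2 * (2 ^ l * (1 / s + 1) * Q ^ (1 - l) * zet l) with hV
  have hUnn : 0 ≤ U := by rw [hU]; positivity
  have hVnn : 0 ≤ V := by rw [hV]; positivity
  -- injectivity
  have hΦinj : Function.Injective Φ := by
    intro ξ η hfe
    have hj : ∀ j, ⌊(ξ : E) j / s⌋ = ⌊(η : E) j / s⌋ := fun j => congrFun hfe j
    by_contra hne'
    have hxy : (ξ : E) - (η : E) ≠ 0 :=
      sub_ne_zero.mpr (fun hc => hne' (Subtype.ext hc))
    have hmem : (ξ : E) - (η : E) ∈ Λ₀ := Λ₀.sub_mem (hsub ξ.2.1) (hsub η.2.1)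
    have h2 := hsep₀ _ hmem hxy
    have h3 := inj_aux hd hspos (ξ : E) (η : E) hj
    have hss : s * sd = 2 * r₀ := by
      rw [hsdef]; field_simp
    rw [hss] at h3
    linarith
  -- norm lower bound
  have hnorm_ge : ∀ ξ : T, M' ≤ ‖(ξ : E)‖ := by
    intro ξ
    obtain ⟨hmem, hne0, hAle⟩ := ξ.2
    have h2r := hsep _ hmem hne0
    have hrnn : 0 ≤ r := le_of_lt hrpos
    apply max_le
    · exact max_le hAle (by linarith)
    · linarith
  -- pointwise bound
  have hpoint : ∀ ξ : T,
      ENNReal.ofReal (fL d L (ξ : EuclideanSpace ℝ (Fin d))) ≤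
        ∑ j₀ : Fin d, ∏ j : Fin d, gT j₀ j (Φ ξ j) := by
    intro ξ
    obtain ⟨j₀, hj₀⟩ := exists_big_coord hd (ξ : EuclideanSpace ℝ (Fin d))
    have hMj : M' / sd ≤ |(ξ : EuclideanSpace ℝ (Fin d)) j₀| := by
      refine le_trans ?_ hj₀
      gcongr
      exact hnorm_ge ξ
    have hcond : Q ≤ 1 + s * (intShift (Φ ξ j₀) : ℝ) := by
      have hfb := (floor_bounds (x := (ξ : EuclideanSpace ℝ (Fin d)) j₀) hspos).2
      have hge0 : 0 ≤ s * (intShift (⌊(ξ : EuclideanSpace ℝ (Fin d)) j₀ / s⌋) : ℝ) := by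
        positivity
      have hΦval : Φ ξ j₀ = ⌊(ξ : EuclideanSpace ℝ (Fin d)) j₀ / s⌋ := rfl
      rw [hΦval, hQdef]
      apply max_le
      · linarith
      · linarith
    have hprod : ENNReal.ofReal (fL d L (ξ : EuclideanSpace ℝ (Fin d))) ≤
        ∏ j : Fin d, gT j₀ j (Φ ξ j) := by
      have heq : ∏ j : Fin d, gT j₀ j (Φ ξ j) = ∏ j : Fin d, fullT (Φ ξ j) := by
        apply Finset.prod_congr rfl
        intro j _
        by_cases hj : j = j₀
        · subst hj
          simp only [hgT, if_pos rfl, if_pos hcond]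
        · simp only [hgT, if_neg hj]
      rw [heq]
      have heq2 : ∏ j : Fin d, fullT (Φ ξ j) =
          ENNReal.ofReal (∏ j : Fin d, (1 + s * (intShift (Φ ξ j) : ℝ)) ^ (-l)) := by
        rw [ENNReal.ofReal_prod_of_nonneg (fun j _ => by positivity)]
      rw [heq2]
      apply ENNReal.ofReal_le_ofReal
      rw [fL]
      apply Finset.prod_le_prod (fun j _ => by positivity)
      intro j _
      exact coord_bound (L := L j) hspos hl_pos (hl_le j)
        (x := (ξ : EuclideanSpace ℝ (Fin d)) j)
    exact le_trans hprod (Finset.single_le_sum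
      (f := fun j₀' => ∏ j : Fin d, gT j₀' j (Φ ξ j))
      (fun i _ => zero_le) (Finset.mem_univ j₀))
  -- 1-D sums
  have hfull_sum : ∑' m : ℤ, fullT m ≤ ENNReal.ofReal U := by
    have h1 : ∑' m : ℤ, fullT m
        = 2 * ∑' k : ℕ, ENNReal.ofReal ((1 + s * (k : ℝ)) ^ (-l)) :=
      int_shift_tsum (fun k : ℕ => ENNReal.ofReal ((1 + s * (k : ℝ)) ^ (-l)))
    rw [h1]
    have h2 := group_sum (l := l) (a := s) (c := 1) hl1 hspos one_pos
    calc 2 * ∑' k : ℕ, ENNReal.ofReal ((1 + s * (k : ℝ)) ^ (-l))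
        ≤ 2 * ENNReal.ofReal ((1 / s + 1) * (1:ℝ) ^ (-l) * zet l) := mul_le_mul_right h2 2
      _ = ENNReal.ofReal U := by
          rw [show (2 : ℝ≥0∞) = ENNReal.ofReal 2 by norm_num,
            ← ENNReal.ofReal_mul (by norm_num)]
          congr 1
          rw [Real.one_rpow, hU]; ring
  have htail_sum : ∑' m : ℤ,
      (if Q ≤ 1 + s * (intShift m : ℝ) then fullT m else 0) ≤ ENNReal.ofReal V := by
    have h1 : ∑' m : ℤ, (if Q ≤ 1 + s * (intShift m : ℝ) then fullT m else 0)
        = 2 * ∑' k : ℕ,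
          (if Q ≤ 1 + s * (k : ℝ) then ENNReal.ofReal ((1 + s * (k : ℝ)) ^ (-l)) else 0) :=
      int_shift_tsum (fun k : ℕ =>
        if Q ≤ 1 + s * (k : ℝ) then ENNReal.ofReal ((1 + s * (k : ℝ)) ^ (-l)) else 0)
    rw [h1]
    calc 2 * ∑' k : ℕ,
          (if Q ≤ 1 + s * (k : ℝ) then ENNReal.ofReal ((1 + s * (k : ℝ)) ^ (-l)) else 0)
        ≤ 2 * ENNReal.ofReal (2 ^ l * (1 / s + 1) * Q ^ (1 - l) * zet l) :=
          mul_le_mul_right (tail_sum hl1 hspos hQ1) 2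
      _ = ENNReal.ofReal V := by
          rw [show (2 : ℝ≥0∞) = ENNReal.ofReal 2 by norm_num,
            ← ENNReal.ofReal_mul (by norm_num)]
  -- the grid sum for each j₀
  have hgrid : ∀ j₀ : Fin d, ∑' n : Fin d → ℤ, ∏ j, gT j₀ j (n j) ≤
      ENNReal.ofReal V * ENNReal.ofReal U ^ (d - 1) := by
    intro j₀
    rw [tsum_pi_prod d (gT j₀)]
    rw [Fintype.prod_eq_mul_prod_compl j₀ (fun j => ∑' m : ℤ, gT j₀ j m)]
    apply mul_le_mul'
    · have hcongr : ∀ m : ℤ, gT j₀ j₀ m =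
          (if Q ≤ 1 + s * (intShift m : ℝ) then fullT m else 0) := by
        intro m; simp [hgT]
      rw [tsum_congr hcongr]
      exact htail_sum
    · calc ∏ j ∈ ({j₀}ᶜ : Finset (Fin d)), ∑' m : ℤ, gT j₀ j m
          ≤ ENNReal.ofReal U ^ (({j₀}ᶜ : Finset (Fin d)).card) := by
            apply Finset.prod_le_pow_card
            intro j hj
            have hjne : j ≠ j₀ := by simpa using hj
            have hcongr : ∀ m : ℤ, gT j₀ j m = fullT m := by
              intro m; simp [hgT, hjne]
            rw [tsum_congr hcongr]
            exact hfull_sum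
        _ = ENNReal.ofReal U ^ (d - 1) := by
            congr 1
            simp [Finset.card_compl]
  -- numeric inequality
  have hnum : (d : ℝ) * (V * U ^ (d - 1)) ≤
      C * r₀ ^ (-(d : ℝ)) * (1 + r₀) ^ ((d : ℝ) * Lbar) * M ^ (1 - l) := by
    have hUV : V * U ^ (d - 1) = 2 ^ l * Q ^ (1 - l) * U ^ d := by
      have hd' : d - 1 + 1 = d := Nat.succ_pred_eq_of_pos hd
      calc V * U ^ (d - 1) = (2 ^ l * Q ^ (1 - l)) * (U * U ^ (d - 1)) := by
            rw [hV, hU]; ring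
        _ = (2 ^ l * Q ^ (1 - l)) * U ^ (d - 1 + 1) := by rw [← pow_succ']
        _ = 2 ^ l * Q ^ (1 - l) * U ^ d := by rw [hd']
    have hUb : U ≤ (2 * zet l * sd) * ((1 + r₀) / r₀) := by
      have h1s : 1 / s = sd / (2 * r₀) := by
        rw [hsdef, one_div_div]
      have hb1 : 1 / s + 1 ≤ sd * (1 + r₀) / r₀ := by
        rw [h1s, div_add' _ _ _ (ne_of_gt (by positivity : (0:ℝ) < 2 * r₀))]
        rw [div_le_div_iff₀ (by positivity) (by positivity)]
        nlinarith [hr₀pos, hsd1, mul_pos hr₀pos hr₀pos, mul_nonneg hsd.le hr₀pos.le,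
          mul_nonneg (mul_nonneg hsd.le hr₀pos.le) hr₀pos.le]
      calc U = 2 * zet l * (1 / s + 1) := by rw [hU]; ring
        _ ≤ 2 * zet l * (sd * (1 + r₀) / r₀) :=
            mul_le_mul_of_nonneg_left hb1 (by positivity)
        _ = (2 * zet l * sd) * ((1 + r₀) / r₀) := by ring
    have hUd : U ^ d ≤ (2 * zet l * sd) ^ d * ((1 + r₀) ^ d * r₀ ^ (-(d : ℝ))) := by
      have h1 : U ^ d ≤ ((2 * zet l * sd) * ((1 + r₀) / r₀)) ^ d :=
        pow_le_pow_left₀ hUnn hUb d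
      have h2 : r₀ ^ (-(d : ℝ)) = ((r₀ : ℝ) ^ d)⁻¹ := by
        rw [Real.rpow_neg (le_of_lt hr₀pos), Real.rpow_natCast]
      have h3 : ((2 * zet l * sd) * ((1 + r₀) / r₀)) ^ d
          = (2 * zet l * sd) ^ d * ((1 + r₀) ^ d * (r₀ ^ d)⁻¹) := by
        rw [mul_pow, div_pow, div_eq_mul_inv]
      rw [h2]
      calc U ^ d ≤ ((2 * zet l * sd) * ((1 + r₀) / r₀)) ^ d := h1
        _ = (2 * zet l * sd) ^ d * ((1 + r₀) ^ d * (r₀ ^ d)⁻¹) := h3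
    have hQb : M / (4 * sd * (1 + r₀)) ≤ Q := by
      rcases le_or_gt M (4 * sd * (1 + r₀)) with h | h
      · calc M / (4 * sd * (1 + r₀)) ≤ 1 := by
              rw [div_le_one (by positivity)]; exact h
          _ ≤ Q := hQ1
      · have hsle : s ≤ M / (2 * sd) := by
          have e1 : s ≤ 2 * (1 + r₀) := by
            rw [hsdef, div_le_iff₀ (by positivity)]
            nlinarith
          have e2 : 2 * (1 + r₀) ≤ M / (2 * sd) := by
            rw [le_div_iff₀ (by positivity)]
            nlinarith
          linarith
        have hMM' : M / sd ≤ M' / sd := by gcongr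
        have hsplit : M / sd - M / (2 * sd) = M / (2 * sd) := by
          field_simp; ring
        have h1 : M / (2 * sd) ≤ 1 + M' / sd - s := by linarith
        have h2 : M / (4 * sd * (1 + r₀)) ≤ M / (2 * sd) := by
          apply div_le_div_of_nonneg_left hMpos.le (by positivity)
          nlinarith
        calc M / (4 * sd * (1 + r₀)) ≤ M / (2 * sd) := h2
          _ ≤ 1 + M' / sd - s := h1
          _ ≤ Q := le_max_right _ _
    have hQl : Q ^ (1 - l) ≤ (4 * sd) ^ (l - 1) * (1 + r₀) ^ (l - 1) * M ^ (1 - l) := by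
      have hbase : (0 : ℝ) < M / (4 * sd * (1 + r₀)) := by positivity
      have h1 : Q ^ (1 - l) ≤ (M / (4 * sd * (1 + r₀))) ^ (1 - l) :=
        Real.rpow_le_rpow_of_nonpos hbase hQb (by linarith)
      have h2 : (M / (4 * sd * (1 + r₀))) ^ (1 - l)
          = M ^ (1 - l) / (4 * sd * (1 + r₀)) ^ (1 - l) :=
        Real.div_rpow hMpos.le (by positivity : (0:ℝ) ≤ 4 * sd * (1 + r₀)) (1 - l)
      have h3 : (4 * sd * (1 + r₀)) ^ (1 - l)
          = ((4 * sd) ^ (l - 1) * (1 + r₀) ^ (l - 1))⁻¹ := by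
        rw [Real.mul_rpow (by positivity) (by positivity)]
        rw [show (1 - l) = -(l - 1) by ring]
        rw [Real.rpow_neg (by positivity), Real.rpow_neg (by positivity), mul_inv]
      rw [h2, h3, div_inv_eq_mul] at h1
      calc Q ^ (1 - l) ≤ M ^ (1 - l) * ((4 * sd) ^ (l - 1) * (1 + r₀) ^ (l - 1)) := h1
        _ = (4 * sd) ^ (l - 1) * (1 + r₀) ^ (l - 1) * M ^ (1 - l) := by ring
    have hexp : (1 + r₀) ^ d * (1 + r₀) ^ (l - 1) ≤ (1 + r₀) ^ ((d : ℝ) * Lbar) := by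
      have h1 : (1 + r₀) ^ d * (1 + r₀) ^ (l - 1) = (1 + r₀) ^ ((d : ℝ) + (l - 1)) := by
        rw [Real.rpow_add (by positivity), Real.rpow_natCast]
      rw [h1]
      apply Real.rpow_le_rpow_of_exponent_le (by linarith)
      nlinarith [hLbar_ge, hl1, hd1]
    have t1 : (d : ℝ) * (V * U ^ (d - 1)) = (d : ℝ) * 2 ^ l * Q ^ (1 - l) * U ^ d := by
      rw [hUV]; ring
    have t2 : (d : ℝ) * 2 ^ l * Q ^ (1 - l) * U ^ d ≤
        (d : ℝ) * 2 ^ l * ((4 * sd) ^ (l - 1) * (1 + r₀) ^ (l - 1) * M ^ (1 - l)) * U ^ d := by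
      apply mul_le_mul_of_nonneg_right _ (pow_nonneg hUnn d)
      exact mul_le_mul_of_nonneg_left hQl (by positivity)
    have t3 : (d : ℝ) * 2 ^ l * ((4 * sd) ^ (l - 1) * (1 + r₀) ^ (l - 1) * M ^ (1 - l)) * U ^ d ≤
        (d : ℝ) * 2 ^ l * ((4 * sd) ^ (l - 1) * (1 + r₀) ^ (l - 1) * M ^ (1 - l)) *
          ((2 * zet l * sd) ^ d * ((1 + r₀) ^ d * r₀ ^ (-(d : ℝ)))) := by
      apply mul_le_mul_of_nonneg_left hUd (by positivity)
    have t4 : (d : ℝ) * 2 ^ l * ((4 * sd) ^ (l - 1) * (1 + r₀) ^ (l - 1) * M ^ (1 - l)) *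
          ((2 * zet l * sd) ^ d * ((1 + r₀) ^ d * r₀ ^ (-(d : ℝ))))
        = C * r₀ ^ (-(d : ℝ)) * ((1 + r₀) ^ d * (1 + r₀) ^ (l - 1)) * M ^ (1 - l) := by
      rw [hC]; ring
    have t5 : C * r₀ ^ (-(d : ℝ)) * ((1 + r₀) ^ d * (1 + r₀) ^ (l - 1)) * M ^ (1 - l) ≤
        C * r₀ ^ (-(d : ℝ)) * (1 + r₀) ^ ((d : ℝ) * Lbar) * M ^ (1 - l) := by
      apply mul_le_mul_of_nonneg_right _ (by positivity)
      exact mul_le_mul_of_nonneg_left hexp (by positivity)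
    calc (d : ℝ) * (V * U ^ (d - 1)) = (d : ℝ) * 2 ^ l * Q ^ (1 - l) * U ^ d := t1
      _ ≤ _ := t2
      _ ≤ _ := t3
      _ = _ := t4
      _ ≤ _ := t5
  have hRHSnn : 0 ≤ C * r₀ ^ (-(d : ℝ)) * (1 + r₀) ^ ((d : ℝ) * Lbar) * M ^ (1 - l) := by
    positivity
  -- ENNReal chain
  have key : (∑' ξ : T, ENNReal.ofReal (fL d L (ξ : EuclideanSpace ℝ (Fin d)))) ≤
      ENNReal.ofReal (C * r₀ ^ (-(d : ℝ)) * (1 + r₀) ^ ((d : ℝ) * Lbar) * M ^ (1 - l)) := by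
    calc ∑' ξ : T, ENNReal.ofReal (fL d L (ξ : EuclideanSpace ℝ (Fin d)))
        ≤ ∑' ξ : T, ∑ j₀ : Fin d, ∏ j, gT j₀ j (Φ ξ j) :=
          Summable.tsum_le_tsum hpoint ENNReal.summable ENNReal.summable
      _ ≤ ∑' n : Fin d → ℤ, ∑ j₀ : Fin d, ∏ j, gT j₀ j (n j) :=
          ENNReal.tsum_comp_le_tsum_of_injective hΦinj
            (fun n => ∑ j₀ : Fin d, ∏ j, gT j₀ j (n j))
      _ = ∑ j₀ : Fin d, ∑' n : Fin d → ℤ, ∏ j, gT j₀ j (n j) :=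
          Summable.tsum_finsetSum (fun _ _ => ENNReal.summable)
      _ ≤ ∑ _j₀ : Fin d, ENNReal.ofReal V * ENNReal.ofReal U ^ (d - 1) :=
          Finset.sum_le_sum (fun j₀ _ => hgrid j₀)
      _ = (d : ℝ≥0∞) * (ENNReal.ofReal V * ENNReal.ofReal U ^ (d - 1)) := by
          rw [Finset.sum_const, Finset.card_univ, Fintype.card_fin, nsmul_eq_mul]
      _ = ENNReal.ofReal ((d : ℝ) * (V * U ^ (d - 1))) := by
          rw [← ENNReal.ofReal_pow hUnn, ← ENNReal.ofReal_mul hVnn,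
            ← ENNReal.ofReal_natCast d, ← ENNReal.ofReal_mul (by positivity)]
      _ ≤ ENNReal.ofReal (C * r₀ ^ (-(d : ℝ)) * (1 + r₀) ^ ((d : ℝ) * Lbar) * M ^ (1 - l)) :=
          ENNReal.ofReal_le_ofReal hnum
  -- endgame
  by_cases hsumm : Summable (fun ξ : T => fL d L (ξ : EuclideanSpace ℝ (Fin d)))
  · have hofr : ENNReal.ofReal (∑' ξ : T, fL d L (ξ : EuclideanSpace ℝ (Fin d)))
        = ∑' ξ : T, ENNReal.ofReal (fL d L (ξ : EuclideanSpace ℝ (Fin d))) :=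
      ENNReal.ofReal_tsum_of_nonneg
        (fun ξ => by rw [fL]; exact Finset.prod_nonneg (fun j _ => by positivity)) hsumm
    have hfin := le_trans (le_of_eq hofr) key
    exact (ENNReal.ofReal_le_ofReal_iff hRHSnn).mp hfin
  · rw [tsum_eq_zero_of_not_summable hsumm]
    exact hRHSnn
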